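/- Assume condition (Q1) or (Q2), and let T > 0. If u₁, u₂ ∈ C([0,T] × ℝ^d) both satisfy: ‖u_i(t,·) − u_i(0,·)‖_∞ → 0 as t → 0+; sup_{t ∈ [0,T]} ‖u_i(t,·) 1_{|·| ≥ r}‖_∞ → 0 as r → ∞; and ∂_t u_i(t,x) = L_x^{κ,0+} u_i(t,x) for all (t,x) ∈ (0,T] × ℝ^d; and if u₁(0,x) = u₂(0,x) for all x ∈ ℝ^d, then u₁ ≡ u₂ on [0,T] × ℝ^d. -/

import Mathlib

open MeasureTheory Filter Set
open scoped ENNReal NNReal Topology RealInnerProductSpace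

noncomputable section

/-- Euclidean space ℝ^d. -/
abbrev Ed (d : ℕ) := EuclideanSpace ℝ (Fin d)

/-- `h(r) = ∫_{ℝ^d} (1 ∧ |x|²/r²) ν(|x|) dx`. -/
def hfun (d : ℕ) (ν : ℝ → ℝ) (r : ℝ) : ℝ :=
  ∫ x : Ed d, min 1 (‖x‖ ^ 2 / r ^ 2) * ν ‖x‖

/-- generalized inverse `h⁻¹(s) = inf {r > 0 : h(r) ≤ s}`. -/
def hinv (d : ℕ) (ν : ℝ → ℝ) (s : ℝ) : ℝ :=
  sInf {r : ℝ | 0 < r ∧ hfun d ν r ≤ s}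

/-- `K(r) = r⁻² ∫_{|x|<r} |x|² ν(|x|) dx`. -/
def Kfun (d : ℕ) (ν : ℝ → ℝ) (r : ℝ) : ℝ :=
  r ^ (-2 : ℝ) * ∫ x in {x : Ed d | ‖x‖ < r}, ‖x‖ ^ 2 * ν ‖x‖

/-- the bound function `ρ_t(x) = [h⁻¹(1/t)]^{-d} ∧ (t K(|x|) |x|^{-d})`. -/
def rhoB (d : ℕ) (ν : ℝ → ℝ) (t : ℝ) (x : Ed d) : ℝ :=
  min (hinv d ν (1 / t) ^ (-(d : ℝ))) (t * Kfun d ν ‖x‖ * ‖x‖ ^ (-(d : ℝ)))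

/-- `Θ(t) = 1 + ln(1 ∨ [h⁻¹(1/t)]⁻¹)`. -/
def Theta (d : ℕ) (ν : ℝ → ℝ) (t : ℝ) : ℝ :=
  1 + Real.log (max 1 (hinv d ν (1 / t))⁻¹)

/-- `ϱ^γ_β(t,x) = [h⁻¹(1/t)]^γ (|x|^β ∧ 1) t⁻¹ ρ_t(x)`. -/
def errf (d : ℕ) (ν : ℝ → ℝ) (γ β t : ℝ) (x : Ed d) : ℝ :=
  hinv d ν (1 / t) ^ γ * min (‖x‖ ^ β) 1 * t⁻¹ * rhoB d ν t x

/-- standing assumptions on ν, including `h(0+) = ∞`. -/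
def NuOK (d : ℕ) (ν : ℝ → ℝ) : Prop :=
  Measurable ν ∧ (∀ r, 0 ≤ ν r) ∧ AntitoneOn ν (Ici 0) ∧
  Integrable (fun x : Ed d => min 1 (‖x‖ ^ 2) * ν ‖x‖) ∧
  Tendsto (hfun d ν) (𝓝[>] 0) atTop

/-- `λ_J⁻¹ ν(|x|) ≤ J(x) ≤ λ_J ν(|x|)`. -/
def JOK (d : ℕ) (ν : ℝ → ℝ) (lJ : ℝ) (J : Ed d → ℝ) : Prop :=
  1 ≤ lJ ∧ Measurable J ∧ ∀ x, lJ⁻¹ * ν ‖x‖ ≤ J x ∧ J x ≤ lJ * ν ‖x‖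

/-- weak lower scaling condition at the origin. -/
def WLSC (d : ℕ) (ν : ℝ → ℝ) (ah Ch : ℝ) : Prop :=
  ah ∈ Ioc (0 : ℝ) 2 ∧ 1 ≤ Ch ∧
  ∀ lam r : ℝ, 0 < lam → lam ≤ 1 → 0 < r → r ≤ 1 →
    hfun d ν r ≤ Ch * lam ^ ah * hfun d ν (lam * r)

/-- weak upper scaling condition at the origin. -/
def WUSC (d : ℕ) (ν : ℝ → ℝ) (bh ch : ℝ) : Prop :=
  bh ∈ Ioc (0 : ℝ) 2 ∧ ch ∈ Ioc (0 : ℝ) 1 ∧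
  ∀ lam r : ℝ, 0 < lam → lam ≤ 1 → 0 < r → r ≤ 1 →
    ch * lam ^ bh * hfun d ν (lam * r) ≤ hfun d ν r

/-- the assumptions on the coefficient κ(x,z). -/
def KapOK (d : ℕ) (ν : ℝ → ℝ) (J : Ed d → ℝ) (κf : Ed d → Ed d → ℝ)
    (κ0 κ1 κ2 κ3 κ4 β : ℝ) : Prop :=
  Measurable (Function.uncurry κf) ∧ 0 < κ0 ∧
  (∀ x z, κ0 ≤ κf x z ∧ κf x z ≤ κ1) ∧
  β ∈ Ioo (0 : ℝ) 1 ∧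
  (∀ x y z, |κf x z - κf y z| ≤ κ2 * ‖x - y‖ ^ β) ∧
  0 ≤ κ3 ∧ 0 ≤ κ4 ∧
  (∀ x : Ed d, ∀ r ∈ Ioc (0 : ℝ) 1,
    ‖∫ z in {z : Ed d | r ≤ ‖z‖ ∧ ‖z‖ < 1}, (κf x z * J z) • z‖ ≤ κ3 * (r * hfun d ν r)) ∧
  (∀ x y : Ed d, ∀ r ∈ Ioc (0 : ℝ) 1,
    ‖∫ z in {z : Ed d | r ≤ ‖z‖ ∧ ‖z‖ < 1}, ((κf x z - κf y z) * J z) • z‖ ≤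
      κ4 * ‖x - y‖ ^ β * (r * hfun d ν r))

/-- condition (Q0). -/
def Q0 (d : ℕ) (ν : ℝ → ℝ) (lJ : ℝ) (J : Ed d → ℝ) (κf : Ed d → Ed d → ℝ)
    (κ0 κ1 κ2 κ3 κ4 β ah Ch : ℝ) : Prop :=
  NuOK d ν ∧ JOK d ν lJ J ∧ KapOK d ν J κf κ0 κ1 κ2 κ3 κ4 β ∧ WLSC d ν ah Ch ∧ ah ≤ 1

/-- condition (Q1). -/
def Q1 (d : ℕ) (ν : ℝ → ℝ) (lJ : ℝ) (J : Ed d → ℝ) (κf : Ed d → Ed d → ℝ)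
    (κ0 κ1 κ2 κ3 κ4 β ah Ch : ℝ) : Prop :=
  NuOK d ν ∧ JOK d ν lJ J ∧ KapOK d ν J κf κ0 κ1 κ2 κ3 κ4 β ∧ WLSC d ν ah Ch ∧ ah = 1

/-- condition (Q2). -/
def Q2 (d : ℕ) (ν : ℝ → ℝ) (lJ : ℝ) (J : Ed d → ℝ) (κf : Ed d → Ed d → ℝ)
    (κ0 κ1 κ2 κ3 κ4 β ah Ch bh ch : ℝ) : Prop :=
  NuOK d ν ∧ JOK d ν lJ J ∧ KapOK d ν J κf κ0 κ1 κ2 κ3 κ4 β ∧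
  WLSC d ν ah Ch ∧ WUSC d ν bh ch ∧ ah ≤ bh ∧ bh < 1 ∧ 1 - ah < min β ah

/-- Kf is admissible. -/
def Admis (d : ℕ) (ν : ℝ → ℝ) (J : Ed d → ℝ) (κ0 κ1 κ3 : ℝ) (Kf : Ed d → ℝ) : Prop :=
  Measurable Kf ∧ (∀ z, κ0 ≤ Kf z ∧ Kf z ≤ κ1) ∧
  ∀ r ∈ Ioc (0 : ℝ) 1,
    ‖∫ z in {z : Ed d | r ≤ ‖z‖ ∧ ‖z‖ < 1}, (Kf z * J z) • z‖ ≤ κ3 * (r * hfun d ν r)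

/-- the Lévy–Khintchine exponent of the operator with frozen coefficient Kf. -/
def psiK (d : ℕ) (J Kf : Ed d → ℝ) (ξ : Ed d) : ℂ :=
  ∫ z : Ed d,
    (1 - Complex.exp (Complex.I * (⟪ξ, z⟫ : ℂ))
      + Complex.I * (⟪ξ, z⟫ : ℂ) * (if ‖z‖ < 1 then 1 else 0)) * ((Kf z * J z : ℝ) : ℂ)

/-- the heat kernel of L^Kf as a function of `t` and `w = y - x`. -/
def pLevy (d : ℕ) (J Kf : Ed d → ℝ) (t : ℝ) (w : Ed d) : ℝ :=
  ((2 * Real.pi) ^ d)⁻¹ *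
    (∫ ξ : Ed d,
      Complex.exp (-(Complex.I * (⟪ξ, w⟫ : ℂ)) - (t : ℂ) * psiK d J Kf ξ)).re

/-- `p^Kf(t,x,y) = p^Kf(t, y - x)`. -/
def pKer (d : ℕ) (J Kf : Ed d → ℝ) (t : ℝ) (x y : Ed d) : ℝ :=
  pLevy d J Kf t (y - x)

/-- `δ^Kf(t,x,y;z)`. -/
def deltaK (d : ℕ) (J Kf : Ed d → ℝ) (t : ℝ) (x y z : Ed d) : ℝ :=
  pKer d J Kf t (x + z) y - pKer d J Kf t x y -
    (if ‖z‖ < 1 then ⟪z, gradient (fun u => pKer d J Kf t u y) x⟫ else 0)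

/-- `L_x^{Kg} p^Kf(t,x,y) = ∫ δ^Kf(t,x,y;z) Kg(z) J(z) dz`. -/
def LKop (d : ℕ) (J Kg Kf : Ed d → ℝ) (t : ℝ) (x y : Ed d) : ℝ :=
  ∫ z : Ed d, deltaK d J Kf t x y z * (Kg z * J z)

/-- `q₀(t,x,y)`. -/
def q0f (d : ℕ) (J : Ed d → ℝ) (κf : Ed d → Ed d → ℝ) (t : ℝ) (x y : Ed d) : ℝ :=
  ∫ z : Ed d, deltaK d J (κf y) t x y z * ((κf x z - κf y z) * J z)

/-- `q_n(t,x,y)`. -/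
def qnf (d : ℕ) (J : Ed d → ℝ) (κf : Ed d → Ed d → ℝ) : ℕ → ℝ → Ed d → Ed d → ℝ
  | 0 => q0f d J κf
  | n + 1 => fun t x y =>
      ∫ s in Ioo (0 : ℝ) t, ∫ z : Ed d, q0f d J κf (t - s) x z * qnf d J κf n s z y

/-- `q(t,x,y) = Σ_n q_n(t,x,y)`. -/
def qf (d : ℕ) (J : Ed d → ℝ) (κf : Ed d → Ed d → ℝ) (t : ℝ) (x y : Ed d) : ℝ :=
  ∑' n : ℕ, qnf d J κf n t x y

/-- the parametrix heat kernel `p^κ(t,x,y)`. -/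
def pkap (d : ℕ) (J : Ed d → ℝ) (κf : Ed d → Ed d → ℝ) (t : ℝ) (x y : Ed d) : ℝ :=
  pKer d J (κf y) t x y +
    ∫ s in Ioo (0 : ℝ) t, ∫ z : Ed d, pKer d J (κf z) (t - s) x z * qf d J κf s z y

/-- the integral defining `L^{κ,ε} f(x)` (over `{|z| > ε}`; `ε = 0` gives `L^κ`). -/
def Lint (d : ℕ) (J : Ed d → ℝ) (κf : Ed d → Ed d → ℝ) (ε : ℝ) (f : Ed d → ℝ) (x : Ed d) : ℝ :=
  ∫ z in {z : Ed d | ε < ‖z‖},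
    (f (x + z) - f x - (if ‖z‖ < 1 then ⟪z, gradient f x⟫ else 0)) * (κf x z * J z)

/-- `L^{κ,ε} f(x)` is well defined. -/
def LintDef (d : ℕ) (J : Ed d → ℝ) (κf : Ed d → Ed d → ℝ) (ε : ℝ) (f : Ed d → ℝ)
    (x : Ed d) : Prop :=
  DifferentiableAt ℝ f x ∧
  IntegrableOn (fun z : Ed d =>
      (f (x + z) - f x - (if ‖z‖ < 1 then ⟪z, gradient f x⟫ else 0)) * (κf x z * J z))
    {z : Ed d | ε < ‖z‖}

/-- `L^{κ,0+} f(x)` is well defined with value `A`. -/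
def L0plus (d : ℕ) (J : Ed d → ℝ) (κf : Ed d → Ed d → ℝ) (f : Ed d → ℝ) (x : Ed d)
    (A : ℝ) : Prop :=
  (∀ ε ∈ Ioc (0 : ℝ) 1, LintDef d J κf ε f x) ∧
  Tendsto (fun ε => Lint d J κf ε f x) (𝓝[>] 0) (𝓝 A)

/-- iterated coordinate partial derivatives: `∂^𝛃` for the multi-index recorded by a list. -/
def pdList (d : ℕ) : List (Fin d) → (Ed d → ℝ) → Ed d → ℝ
  | [], f => f
  | i :: l, f => fun x => fderiv ℝ (pdList d l f) x (EuclideanSpace.single i 1)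



/-- One-sided comparison via the nonlocal maximum principle. -/
theorem aux_le_statement_17 (d : ℕ) (J : Ed d → ℝ) (κf : Ed d → Ed d → ℝ) (T : ℝ)
    (hκJ : ∀ x z : Ed d, 0 ≤ κf x z * J z) (hT : 0 < T) (u₁ u₂ : ℝ → Ed d → ℝ)
    (hc₁ : ContinuousOn (fun q : ℝ × Ed d => u₁ q.1 q.2) {q | q.1 ∈ Icc (0 : ℝ) T})
    (hc₂ : ContinuousOn (fun q : ℝ × Ed d => u₂ q.1 q.2) {q | q.1 ∈ Icc (0 : ℝ) T})
    (hi₁ : ∀ ε > (0 : ℝ), ∃ R : ℝ, ∀ t ∈ Icc (0 : ℝ) T, ∀ x : Ed d, R ≤ ‖x‖ → |u₁ t x| < ε)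
    (hi₂ : ∀ ε > (0 : ℝ), ∃ R : ℝ, ∀ t ∈ Icc (0 : ℝ) T, ∀ x : Ed d, R ≤ ‖x‖ → |u₂ t x| < ε)
    (he₁ : ∀ t ∈ Ioc (0 : ℝ) T, ∀ x : Ed d, ∃ A : ℝ,
      L0plus d J κf (fun x' => u₁ t x') x A ∧ HasDerivAt (fun s => u₁ s x) A t)
    (he₂ : ∀ t ∈ Ioc (0 : ℝ) T, ∀ x : Ed d, ∃ A : ℝ,
      L0plus d J κf (fun x' => u₂ t x') x A ∧ HasDerivAt (fun s => u₂ s x) A t)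
    (h0 : ∀ x : Ed d, u₁ 0 x = u₂ 0 x) :
    ∀ t ∈ Icc (0 : ℝ) T, ∀ x : Ed d, u₁ t x ≤ u₂ t x := by
  by_contra hcon
  push_neg at hcon
  obtain ⟨ts, hts, xs, hxs⟩ := hcon
  obtain ⟨c, hcdef⟩ : ∃ c : ℝ, c = u₁ ts xs - u₂ ts xs := ⟨_, rfl⟩
  have hc : 0 < c := by rw [hcdef]; linarith
  obtain ⟨ε, hεdef⟩ : ∃ ε : ℝ, ε = c / (2 * T) := ⟨_, rfl⟩
  have hε : 0 < ε := by rw [hεdef]; exact div_pos hc (by linarith)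
  obtain ⟨R₁, hR₁⟩ := hi₁ (c / 8) (by linarith)
  obtain ⟨R₂, hR₂⟩ := hi₂ (c / 8) (by linarith)
  set R : ℝ := max (max R₁ R₂) ‖xs‖ with hRdef
  set K : Set (ℝ × Ed d) := Icc (0 : ℝ) T ×ˢ Metric.closedBall (0 : Ed d) R with hKdef
  have hKc : IsCompact K := isCompact_Icc.prod (isCompact_closedBall _ _)
  have hsK : (ts, xs) ∈ K :=
    ⟨hts, mem_closedBall_zero_iff.mpr (le_max_right _ _)⟩
  have hsub : K ⊆ {q : ℝ × Ed d | q.1 ∈ Icc (0 : ℝ) T} := fun q hq => hq.1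
  have hwc : ContinuousOn (fun q : ℝ × Ed d => u₁ q.1 q.2 - u₂ q.1 q.2 - ε * q.1) K :=
    ((hc₁.mono hsub).sub (hc₂.mono hsub)).sub
      ((continuous_const.mul continuous_fst).continuousOn)
  obtain ⟨⟨t₀, x₀⟩, hq₀K, hq₀max⟩ := hKc.exists_isMaxOn ⟨(ts, xs), hsK⟩ hwc
  have hmax' : ∀ q ∈ K, u₁ q.1 q.2 - u₂ q.1 q.2 - ε * q.1 ≤ u₁ t₀ x₀ - u₂ t₀ x₀ - ε * t₀ :=
    fun q hq => hq₀max hq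
  have hεT : ε * T = c / 2 := by
    rw [hεdef]; field_simp
  have hW₀ : c / 2 ≤ u₁ t₀ x₀ - u₂ t₀ x₀ - ε * t₀ := by
    have h1 := hmax' (ts, xs) hsK
    simp only at h1
    have h2 : ε * ts ≤ ε * T := mul_le_mul_of_nonneg_left hts.2 hε.le
    linarith
  have ht₀T : t₀ ∈ Icc (0 : ℝ) T := hq₀K.1
  have hglob : ∀ t ∈ Icc (0 : ℝ) T, ∀ x : Ed d,
      u₁ t x - u₂ t x - ε * t ≤ u₁ t₀ x₀ - u₂ t₀ x₀ - ε * t₀ := by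
    intro t ht x
    by_cases hx : ‖x‖ ≤ R
    · have := hmax' (t, x) ⟨ht, mem_closedBall_zero_iff.mpr hx⟩
      simpa using this
    · push_neg at hx
      have hxR₁ : R₁ ≤ ‖x‖ := le_trans (le_trans (le_max_left _ _) (le_max_left _ _)) hx.le
      have hxR₂ : R₂ ≤ ‖x‖ := le_trans (le_trans (le_max_right _ _) (le_max_left _ _)) hx.le
      have h1 := abs_lt.mp (hR₁ t ht x hxR₁)
      have h2 := abs_lt.mp (hR₂ t ht x hxR₂)
      have h3 : 0 ≤ ε * t := mul_nonneg hε.le ht.1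
      linarith
  have ht₀pos : 0 < t₀ := by
    rcases lt_or_eq_of_le ht₀T.1 with h | h
    · exact h
    · exfalso
      have hW0 : u₁ t₀ x₀ - u₂ t₀ x₀ - ε * t₀ = 0 := by
        rw [← h, h0 x₀]; ring
      linarith
  have ht₀ : t₀ ∈ Ioc (0 : ℝ) T := ⟨ht₀pos, ht₀T.2⟩
  obtain ⟨A₁, hL₁, hD₁⟩ := he₁ t₀ ht₀ x₀
  obtain ⟨A₂, hL₂, hD₂⟩ := he₂ t₀ ht₀ x₀
  -- time part: ε ≤ A₁ - A₂
  have hφ : HasDerivAt (fun s => u₁ s x₀ - u₂ s x₀ - ε * s) (A₁ - A₂ - ε) t₀ := by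
    have h1 : HasDerivAt (fun s : ℝ => ε * s) (ε * 1) t₀ := (hasDerivAt_id t₀).const_mul ε
    simpa using (hD₁.fun_sub hD₂).fun_sub h1
  have hslope : Tendsto (slope (fun s => u₁ s x₀ - u₂ s x₀ - ε * s) t₀) (𝓝[<] t₀)
      (𝓝 (A₁ - A₂ - ε)) :=
    (hasDerivAt_iff_tendsto_slope.mp hφ).mono_left
      (nhdsWithin_mono t₀ (fun s hs => ne_of_lt hs))
  have htime : 0 ≤ A₁ - A₂ - ε := by
    refine ge_of_tendsto hslope ?_
    filter_upwards [Ioo_mem_nhdsLT ht₀pos] with s hs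
    have hsIcc : s ∈ Icc (0 : ℝ) T := ⟨hs.1.le, le_trans hs.2.le ht₀T.2⟩
    have hws := hglob s hsIcc x₀
    rw [slope_def_field]
    refine div_nonneg_iff.mpr (Or.inr ⟨by linarith, by linarith [hs.2]⟩)
  -- space part: A₁ - A₂ ≤ 0
  have hgmax : ∀ x : Ed d, u₁ t₀ x - u₂ t₀ x ≤ u₁ t₀ x₀ - u₂ t₀ x₀ := by
    intro x
    have h1 := hglob t₀ ht₀T x
    linarith
  have hd₁ : DifferentiableAt ℝ (fun x' => u₁ t₀ x') x₀ := (hL₁.1 1 ⟨one_pos, le_refl 1⟩).1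
  have hd₂ : DifferentiableAt ℝ (fun x' => u₂ t₀ x') x₀ := (hL₂.1 1 ⟨one_pos, le_refl 1⟩).1
  have hloc : IsLocalMax (fun x => u₁ t₀ x - u₂ t₀ x) x₀ :=
    Filter.Eventually.of_forall hgmax
  have hfd0 : fderiv ℝ (fun x => u₁ t₀ x - u₂ t₀ x) x₀ = 0 := hloc.fderiv_eq_zero
  have hfdeq : fderiv ℝ (fun x' => u₁ t₀ x') x₀ = fderiv ℝ (fun x' => u₂ t₀ x') x₀ := by
    have h := fderiv_fun_sub hd₁ hd₂
    rw [hfd0] at h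
    exact sub_eq_zero.mp h.symm
  have hgr : gradient (fun x' => u₁ t₀ x') x₀ = gradient (fun x' => u₂ t₀ x') x₀ := by
    unfold gradient
    rw [hfdeq]
  have hkey : ∀ ε' ∈ Ioc (0 : ℝ) 1,
      Lint d J κf ε' (fun x' => u₁ t₀ x') x₀ - Lint d J κf ε' (fun x' => u₂ t₀ x') x₀ ≤ 0 := by
    intro ε' hε'
    obtain ⟨-, hint₁⟩ := hL₁.1 ε' hε'
    obtain ⟨-, hint₂⟩ := hL₂.1 ε' hε'
    unfold Lint
    rw [← MeasureTheory.integral_sub hint₁ hint₂]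
    apply MeasureTheory.integral_nonpos
    intro z
    simp only [Pi.zero_apply, hgr]
    have hκ := hκJ x₀ z
    have hle := hgmax (x₀ + z)
    nlinarith [mul_nonpos_of_nonpos_of_nonneg
      (show (u₁ t₀ (x₀ + z) - u₂ t₀ (x₀ + z)) - (u₁ t₀ x₀ - u₂ t₀ x₀) ≤ (0 : ℝ) by linarith)
      hκ]
  have hA : A₁ - A₂ ≤ 0 := by
    refine le_of_tendsto (hL₁.2.sub hL₂.2) ?_
    filter_upwards [Ioc_mem_nhdsGT one_pos] with ε' hε'
    exact hkey ε' hε'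
  linarith

/-- Corollary 5.2: uniqueness from the nonlocal maximum principle. -/
theorem statement_17
    (d : ℕ) (hd : 0 < d) (ν : ℝ → ℝ) (lJ : ℝ) (J : Ed d → ℝ) (κf : Ed d → Ed d → ℝ)
    (κ0 κ1 κ2 κ3 κ4 β ah Ch bh ch T : ℝ)
    (hQ : Q1 d ν lJ J κf κ0 κ1 κ2 κ3 κ4 β ah Ch ∨
          Q2 d ν lJ J κf κ0 κ1 κ2 κ3 κ4 β ah Ch bh ch)
    (hT : 0 < T) (u₁ u₂ : ℝ → Ed d → ℝ)
    (hu_cont : ∀ u ∈ ({u₁, u₂} : Set (ℝ → Ed d → ℝ)),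
      ContinuousOn (fun q : ℝ × Ed d => u q.1 q.2) {q | q.1 ∈ Icc (0 : ℝ) T})
    (hu_init : ∀ u ∈ ({u₁, u₂} : Set (ℝ → Ed d → ℝ)),
      ∀ ε > (0 : ℝ), ∃ δ > (0 : ℝ), ∀ t ∈ Ioc (0 : ℝ) T, t < δ →
        ∀ x : Ed d, |u t x - u 0 x| < ε)
    (hu_inf : ∀ u ∈ ({u₁, u₂} : Set (ℝ → Ed d → ℝ)),
      ∀ ε > (0 : ℝ), ∃ R : ℝ, ∀ t ∈ Icc (0 : ℝ) T, ∀ x : Ed d, R ≤ ‖x‖ → |u t x| < ε)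
    (hu_eq : ∀ u ∈ ({u₁, u₂} : Set (ℝ → Ed d → ℝ)),
      ∀ t ∈ Ioc (0 : ℝ) T, ∀ x : Ed d, ∃ A : ℝ,
        L0plus d J κf (fun x' => u t x') x A ∧ HasDerivAt (fun s => u s x) A t)
    (h0 : ∀ x : Ed d, u₁ 0 x = u₂ 0 x) :
    ∀ t ∈ Icc (0 : ℝ) T, ∀ x : Ed d, u₁ t x = u₂ t x := by
  have hbase : NuOK d ν ∧ JOK d ν lJ J ∧ KapOK d ν J κf κ0 κ1 κ2 κ3 κ4 β := by
    rcases hQ with h | h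
    · exact ⟨h.1, h.2.1, h.2.2.1⟩
    · exact ⟨h.1, h.2.1, h.2.2.1⟩
  obtain ⟨hν, hJ, hκ⟩ := hbase
  have hJnn : ∀ z : Ed d, 0 ≤ J z := fun z =>
    le_trans (mul_nonneg (inv_nonneg.mpr (le_trans zero_le_one hJ.1)) (hν.2.1 ‖z‖))
      (hJ.2.2 z).1
  have hκnn : ∀ x z : Ed d, 0 ≤ κf x z := fun x z =>
    le_trans hκ.2.1.le (hκ.2.2.1 x z).1
  have hκJ : ∀ x z : Ed d, 0 ≤ κf x z * J z := fun x z => mul_nonneg (hκnn x z) (hJnn z)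
  have hmem₁ : u₁ ∈ ({u₁, u₂} : Set (ℝ → Ed d → ℝ)) := Set.mem_insert _ _
  have hmem₂ : u₂ ∈ ({u₁, u₂} : Set (ℝ → Ed d → ℝ)) := Set.mem_insert_iff.mpr (Or.inr rfl)
  intro t ht x
  refine le_antisymm ?_ ?_
  · exact aux_le_statement_17 d J κf T hκJ hT u₁ u₂ (hu_cont u₁ hmem₁) (hu_cont u₂ hmem₂)
      (hu_inf u₁ hmem₁) (hu_inf u₂ hmem₂) (hu_eq u₁ hmem₁) (hu_eq u₂ hmem₂) h0 t ht x
  · exact aux_le_statement_17 d J κf T hκJ hT u₂ u₁ (hu_cont u₂ hmem₂) (hu_cont u₁ hmem₁)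
      (hu_inf u₂ hmem₂) (hu_inf u₁ hmem₁) (hu_eq u₂ hmem₂) (hu_eq u₁ hmem₁)
      (fun x => (h0 x).symm) t ht x


end
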